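/- arXiv:math/0507188 — 2 statements merged into one kernel-verified Lean document; each statement's English description precedes it below -/
import Mathlib

section
/- There exists a constant C > 0 such that ∫_{−1}^{1} ∫_{−1}^{1} ( ∫_{−1}^{1} |log|x−u|| / ( (√(1−y²) + √(1−u²))·√(1−u²) ) du )² dy dx ≤ C. In particular, the kernel N₂(x,y) = ∫_{−1}^{1} K̃(x,u)·(y+u) / ( (√(1−y²)+√(1−u²))·√(1−u²) ) du is square-integrable on [−1,1]² whenever |K̃(x,u)| ≤ |log|x−u|| + 1 pointwise. -/
open MeasureTheory

open Real Set

set_option maxHeartbeats 1000000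


lemma II_abs_rpow {r : ℝ} (hr : -1 < r) (a b : ℝ) :
    IntervalIntegrable (fun t : ℝ => |t| ^ r) volume a b := by
  have key : ∀ c : ℝ, 0 ≤ c → IntervalIntegrable (fun t : ℝ => |t| ^ r) volume 0 c := by
    intro c hc
    have h := intervalIntegral.intervalIntegrable_rpow' (a := 0) (b := c) hr
    rw [intervalIntegrable_iff, uIoc_of_le hc] at h ⊢
    exact h.congr_fun (fun x hx => by rw [abs_of_pos hx.1]) measurableSet_Ioc
  have all : ∀ c : ℝ, IntervalIntegrable (fun t : ℝ => |t| ^ r) volume 0 c := by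
    intro c
    rcases le_total 0 c with hc | hc
    · exact key c hc
    · simpa [abs_neg] using (IntervalIntegrable.iff_comp_neg enorm_ne_top).mp (key (-c) (by linarith))
  exact (all a).symm.trans (all b)

lemma integrableOn_abs_sub_rpow {r : ℝ} (hr : -1 < r) (c a b : ℝ) (hab : a ≤ b) :
    IntegrableOn (fun u : ℝ => |u - c| ^ r) (Icc a b) := by
  have h := (II_abs_rpow hr (a - c) (b - c)).comp_sub_right c
  rw [intervalIntegrable_iff_integrableOn_Icc_of_le (by linarith)] at h
  simpa using h

lemma integral_abs_sub_rpow_le {r c : ℝ} (hr : -1 < r) (hc : |c| ≤ 1) :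
    ∫ u in Icc (-1:ℝ) 1, |u - c| ^ r ≤ ∫ t in (-2:ℝ)..2, |t| ^ r := by
  obtain ⟨hc1, hc2⟩ := abs_le.mp hc
  have h1 : ∫ u in Icc (-1:ℝ) 1, |u - c| ^ r ≤ ∫ u in Icc (c-2) (c+2), |u - c| ^ r := by
    refine setIntegral_mono_set (integrableOn_abs_sub_rpow hr c _ _ (by linarith))
      (ae_of_all _ fun u => rpow_nonneg (abs_nonneg _) r) ?_
    exact HasSubset.Subset.eventuallyLE (Icc_subset_Icc (by linarith) (by linarith))
  have h2 : ∫ u in Icc (c-2) (c+2), |u - c| ^ r = ∫ u in (c-2)..(c+2), |u - c| ^ r := by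
    rw [intervalIntegral.integral_of_le (by linarith), integral_Icc_eq_integral_Ioc]
  have h3 : ∫ u in (c-2)..(c+2), |u - c| ^ r = ∫ t in (-2:ℝ)..2, |t| ^ r := by
    rw [intervalIntegral.integral_comp_sub_right (fun t => |t| ^ r) c]
    norm_num
  linarith

lemma B_nonneg (r : ℝ) : 0 ≤ ∫ t in (-2:ℝ)..2, |t| ^ r := by
  apply intervalIntegral.integral_nonneg (by norm_num)
  exact fun u _ => rpow_nonneg (abs_nonneg _) r

lemma log_abs_le_rpow {t : ℝ} (h0 : 0 < t) (h2 : t ≤ 2) :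
    |Real.log t| ≤ 16 * t ^ (-(1/16) : ℝ) := by
  rcases le_total t 1 with h1 | h1
  · rw [abs_of_nonpos (Real.log_nonpos h0.le h1)]
    have h3 : Real.log (t ^ (-(1/16):ℝ)) ≤ t ^ (-(1/16):ℝ) - 1 :=
      Real.log_le_sub_one_of_pos (rpow_pos_of_pos h0 _)
    rw [Real.log_rpow h0] at h3
    nlinarith [rpow_pos_of_pos h0 (-(1/16):ℝ)]
  · rw [abs_of_nonneg (Real.log_nonneg h1)]
    have hl : Real.log t ≤ 1 := by
      have := Real.log_le_sub_one_of_pos h0; linarith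
    have he : (1:ℝ)/2 ≤ t ^ (-(1/16):ℝ) := by
      have ht1 : t ^ ((1:ℝ)/16) ≤ 2 := by
        calc t ^ ((1:ℝ)/16) ≤ t ^ (1:ℝ) := Real.rpow_le_rpow_of_exponent_le h1 (by norm_num)
        _ = t := Real.rpow_one t
        _ ≤ 2 := h2
      rw [Real.rpow_neg h0.le]
      have h4 := inv_anti₀ (rpow_pos_of_pos h0 ((1:ℝ)/16)) ht1
      have : ((2:ℝ))⁻¹ = 1/2 := by norm_num
      linarith
    linarith

lemma rpow_neg_anti {s t e : ℝ} (hs : 0 < s) (h : s ≤ t) (he : 0 ≤ e) :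
    t ^ (-e) ≤ s ^ (-e) := by
  rw [Real.rpow_neg hs.le, Real.rpow_neg (hs.trans_le h).le]
  exact inv_anti₀ (rpow_pos_of_pos hs e) (Real.rpow_le_rpow hs.le h he)

lemma rpow_neg_mul_le {s t α β : ℝ} (hs : 0 < s) (ht : 0 < t) (hα : 0 ≤ α) (hβ : 0 ≤ β) :
    s ^ (-α) * t ^ (-β) ≤ s ^ (-(α+β)) + t ^ (-(α+β)) := by
  rcases le_total s t with h | h
  · have h1 : t ^ (-β) ≤ s ^ (-β) := rpow_neg_anti hs h hβ
    calc s ^ (-α) * t ^ (-β) ≤ s ^ (-α) * s ^ (-β) :=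
          mul_le_mul_of_nonneg_left h1 (rpow_nonneg hs.le _)
      _ = s ^ (-(α+β)) := by rw [← Real.rpow_add hs]; ring_nf
      _ ≤ _ := le_add_of_nonneg_right (rpow_nonneg ht.le _)
  · have h1 : s ^ (-α) ≤ t ^ (-α) := rpow_neg_anti ht h hα
    calc s ^ (-α) * t ^ (-β) ≤ t ^ (-α) * t ^ (-β) :=
          mul_le_mul_of_nonneg_right h1 (rpow_nonneg ht.le _)
      _ = t ^ (-(α+β)) := by rw [← Real.rpow_add ht]; ring_nf
      _ ≤ _ := le_add_of_nonneg_left (rpow_nonneg hs.le _)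

lemma core_bound {x y u : ℝ} (hx : |x| ≤ 1) (hy : |y| < 1) (hu : |u| < 1) (hux : u ≠ x) :
    (|Real.log (|x - u|)| + 1) * 2 /
      ((Real.sqrt (1 - y ^ 2) + Real.sqrt (1 - u ^ 2)) * Real.sqrt (1 - u ^ 2)) ≤
    (Real.sqrt (Real.sqrt (1 - y ^ 2)))⁻¹ *
      (64 * (|u - x| ^ (-(13/16) : ℝ) + |u - 1| ^ (-(13/16) : ℝ) + |u - (-1)| ^ (-(13/16) : ℝ))) := by
  obtain ⟨hy1, hy2⟩ := abs_lt.mp hy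
  obtain ⟨hu1, hu2⟩ := abs_lt.mp hu
  obtain ⟨hx1, hx2⟩ := abs_le.mp hx
  have hay : 0 < 1 - y ^ 2 := by nlinarith
  have hbu : 0 < 1 - u ^ 2 := by nlinarith
  set a := Real.sqrt (1 - y ^ 2) with ha_def
  set b := Real.sqrt (1 - u ^ 2) with hb_def
  have ha : 0 < a := Real.sqrt_pos.mpr hay
  have hb : 0 < b := Real.sqrt_pos.mpr hbu
  have hsa : 0 < Real.sqrt a := Real.sqrt_pos.mpr ha
  have hsb : 0 < Real.sqrt b := Real.sqrt_pos.mpr hb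
  have hden : Real.sqrt a * (Real.sqrt b * b) ≤ (a + b) * b := by
    have h1 : Real.sqrt a * Real.sqrt b ≤ a + b := by
      nlinarith [two_mul_le_add_sq (Real.sqrt a) (Real.sqrt b), Real.sq_sqrt ha.le,
        Real.sq_sqrt hb.le, mul_pos hsa hsb]
    nlinarith
  have hxu0 : 0 < |x - u| := abs_pos.mpr (sub_ne_zero.mpr hux.symm)
  have hxu2 : |x - u| ≤ 2 := abs_le.mpr ⟨by linarith, by linarith⟩
  have hnum : (|Real.log (|x - u|)| + 1) * 2 ≤ 36 * |x - u| ^ (-(1/16) : ℝ) := by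
    have h1 := log_abs_le_rpow hxu0 hxu2
    have h3 : (2:ℝ) ^ (-(1/16):ℝ) ≤ |x - u| ^ (-(1/16):ℝ) :=
      rpow_neg_anti hxu0 hxu2 (by norm_num)
    have h4 : ((2:ℝ))⁻¹ ≤ (2:ℝ) ^ (-(1/16):ℝ) := by
      rw [Real.rpow_neg (by norm_num : (0:ℝ) ≤ 2)]
      apply inv_anti₀ (rpow_pos_of_pos two_pos _)
      calc (2:ℝ) ^ ((1/16):ℝ) ≤ (2:ℝ) ^ (1:ℝ) :=
            Real.rpow_le_rpow_of_exponent_le one_le_two (by norm_num)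
        _ = 2 := Real.rpow_one 2
    have h5 : ((2:ℝ))⁻¹ = 1/2 := by norm_num
    linarith
  have hbr : b = (1 - u ^ 2) ^ ((1:ℝ)/2) := Real.sqrt_eq_rpow _
  have hb32 : Real.sqrt b * b = (1 - u ^ 2) ^ ((3:ℝ)/4) := by
    calc Real.sqrt b * b
        = ((1 - u ^ 2) ^ ((1:ℝ)/2)) ^ ((1:ℝ)/2) * (1 - u ^ 2) ^ ((1:ℝ)/2) := by
          rw [← hbr, Real.sqrt_eq_rpow b]
      _ = (1 - u ^ 2) ^ ((1:ℝ)/4) * (1 - u ^ 2) ^ ((1:ℝ)/2) := by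
          rw [← Real.rpow_mul hbu.le]; norm_num
      _ = (1 - u ^ 2) ^ ((3:ℝ)/4) := by rw [← Real.rpow_add hbu]; norm_num
  have hinv : (Real.sqrt b * b)⁻¹ = (1 - u ^ 2) ^ (-((3:ℝ)/4)) := by
    rw [hb32, ← Real.rpow_neg hbu.le]
  have hsum_nn : (0:ℝ) ≤ |u - x| ^ (-(13/16) : ℝ) + |u - 1| ^ (-(13/16) : ℝ)
      + |u - (-1)| ^ (-(13/16) : ℝ) := by positivity
  have hprod : |x - u| ^ (-(1/16):ℝ) * (1 - u ^ 2) ^ (-((3:ℝ)/4)) ≤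
      |u - x| ^ (-(13/16):ℝ) + |u - 1| ^ (-(13/16):ℝ) + |u - (-1)| ^ (-(13/16):ℝ) := by
    have h1 := rpow_neg_mul_le hxu0 hbu (by norm_num : (0:ℝ) ≤ 1/16)
      (by norm_num : (0:ℝ) ≤ (3:ℝ)/4)
    have he : |x - u| ^ (-(1/16 + (3:ℝ)/4)) = |x - u| ^ (-(13/16):ℝ) := by norm_num
    have he2 : (1 - u ^ 2) ^ (-(1/16 + (3:ℝ)/4)) = (1 - u ^ 2) ^ (-(13/16):ℝ) := by norm_num
    rw [he, he2] at h1
    have h2 : (1 - u ^ 2) ^ (-(13/16):ℝ) ≤ |u - 1| ^ (-(13/16):ℝ) + |u - (-1)| ^ (-(13/16):ℝ) := by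
      rcases le_total u 0 with hu0 | hu0
      · have habs : |u - (-1)| = u + 1 := by rw [abs_of_pos (by linarith)]; ring
        have hle : |u - (-1)| ≤ 1 - u ^ 2 := by rw [habs]; nlinarith
        have h3 := rpow_neg_anti (by rw [habs]; linarith) hle (by norm_num : (0:ℝ) ≤ 13/16)
        have h4 : (0:ℝ) ≤ |u - 1| ^ (-(13/16):ℝ) := by positivity
        linarith
      · have habs : |u - 1| = 1 - u := by rw [abs_of_neg (by linarith)]; ring
        have hle : |u - 1| ≤ 1 - u ^ 2 := by rw [habs]; nlinarith
        have h3 := rpow_neg_anti (by rw [habs]; linarith) hle (by norm_num : (0:ℝ) ≤ 13/16)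
        have h4 : (0:ℝ) ≤ |u - (-1)| ^ (-(13/16):ℝ) := by positivity
        linarith
    have h5 : |x - u| ^ (-(13/16):ℝ) = |u - x| ^ (-(13/16):ℝ) := by rw [abs_sub_comm]
    rw [h5] at h1
    linarith
  have hnn : (0:ℝ) ≤ (|Real.log (|x - u|)| + 1) * 2 := by positivity
  calc (|Real.log (|x - u|)| + 1) * 2 / ((a + b) * b)
      ≤ (|Real.log (|x - u|)| + 1) * 2 / (Real.sqrt a * (Real.sqrt b * b)) := by
        apply div_le_div_of_nonneg_left hnn (by positivity) hden
    _ = (Real.sqrt a)⁻¹ * ((|Real.log (|x - u|)| + 1) * 2 * (Real.sqrt b * b)⁻¹) := by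
        rw [div_eq_mul_inv, mul_inv]; ring
    _ ≤ (Real.sqrt a)⁻¹ * (64 * (|u - x| ^ (-(13/16) : ℝ) + |u - 1| ^ (-(13/16) : ℝ)
          + |u - (-1)| ^ (-(13/16) : ℝ))) := by
        apply mul_le_mul_of_nonneg_left _ (inv_nonneg.mpr (Real.sqrt_nonneg a))
        rw [hinv]
        calc (|Real.log (|x - u|)| + 1) * 2 * (1 - u ^ 2) ^ (-((3:ℝ)/4))
            ≤ 36 * |x - u| ^ (-(1/16):ℝ) * (1 - u ^ 2) ^ (-((3:ℝ)/4)) :=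
              mul_le_mul_of_nonneg_right hnum (rpow_nonneg hbu.le _)
          _ = 36 * (|x - u| ^ (-(1/16):ℝ) * (1 - u ^ 2) ^ (-((3:ℝ)/4))) := by ring
          _ ≤ 36 * (|u - x| ^ (-(13/16) : ℝ) + |u - 1| ^ (-(13/16) : ℝ)
              + |u - (-1)| ^ (-(13/16) : ℝ)) := mul_le_mul_of_nonneg_left hprod (by norm_num)
          _ ≤ 64 * (|u - x| ^ (-(13/16) : ℝ) + |u - 1| ^ (-(13/16) : ℝ)
              + |u - (-1)| ^ (-(13/16) : ℝ)) := by nlinarith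

noncomputable def DD : ℝ := 192 * (∫ t in (-2:ℝ)..2, |t| ^ (-(13/16) : ℝ)) + 1

noncomputable def BB : ℝ := ∫ t in (-2:ℝ)..2, |t| ^ (-(1/2) : ℝ)

lemma BB_nonneg : 0 ≤ BB := B_nonneg _

lemma gsum_integrableOn (x : ℝ) :
    IntegrableOn (fun u : ℝ => |u - x| ^ (-(13/16):ℝ) + |u - 1| ^ (-(13/16):ℝ)
      + |u - (-1)| ^ (-(13/16):ℝ)) (Icc (-1:ℝ) 1) :=
  ((integrableOn_abs_sub_rpow (by norm_num) x (-1) 1 (by norm_num)).add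
    (integrableOn_abs_sub_rpow (by norm_num) 1 (-1) 1 (by norm_num))).add
    (integrableOn_abs_sub_rpow (by norm_num) (-1) (-1) 1 (by norm_num))

lemma gsum_integral_le {x : ℝ} (hx : |x| ≤ 1) :
    ∫ u in Icc (-1:ℝ) 1, (|u - x| ^ (-(13/16):ℝ) + |u - 1| ^ (-(13/16):ℝ)
      + |u - (-1)| ^ (-(13/16):ℝ)) ≤ 3 * (∫ t in (-2:ℝ)..2, |t| ^ (-(13/16) : ℝ)) := by
  have i1 := integrableOn_abs_sub_rpow (r := (-(13/16):ℝ)) (by norm_num) x (-1) 1 (by norm_num)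
  have i2 := integrableOn_abs_sub_rpow (r := (-(13/16):ℝ)) (by norm_num) 1 (-1) 1 (by norm_num)
  have i3 := integrableOn_abs_sub_rpow (r := (-(13/16):ℝ)) (by norm_num) (-1) (-1) 1 (by norm_num)
  have i12 : IntegrableOn (fun u : ℝ => |u - x| ^ (-(13/16):ℝ) + |u - 1| ^ (-(13/16):ℝ))
      (Icc (-1:ℝ) 1) := i1.add i2
  rw [integral_add i12 i3, integral_add i1 i2]
  have e1 := integral_abs_sub_rpow_le (r := (-(13/16):ℝ)) (c := x) (by norm_num) hx
  have e2 := integral_abs_sub_rpow_le (r := (-(13/16):ℝ)) (c := 1) (by norm_num) (by norm_num)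
  have e3 := integral_abs_sub_rpow_le (r := (-(13/16):ℝ)) (c := -1) (by norm_num) (by norm_num)
  linarith

lemma key_inner {x y : ℝ} (hx : x ∈ Icc (-1:ℝ) 1) (hy : y ∈ Ioo (-1:ℝ) 1)
    {f : ℝ → ℝ} (hf0 : ∀ u, 0 ≤ f u)
    (hfle : ∀ u ∈ Ioo (-1:ℝ) 1, u ≠ x →
      f u ≤ (|Real.log (|x - u|)| + 1) * 2 /
        ((Real.sqrt (1 - y ^ 2) + Real.sqrt (1 - u ^ 2)) * Real.sqrt (1 - u ^ 2))) :
    ∫ u in Icc (-1:ℝ) 1, f u ≤ (Real.sqrt (Real.sqrt (1 - y ^ 2)))⁻¹ * DD := by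
  have hx' : |x| ≤ 1 := abs_le.mpr ⟨hx.1, hx.2⟩
  have hy' : |y| < 1 := abs_lt.mpr ⟨hy.1, hy.2⟩
  have hc : 0 ≤ (Real.sqrt (Real.sqrt (1 - y ^ 2)))⁻¹ := inv_nonneg.mpr (Real.sqrt_nonneg _)
  have hgint : IntegrableOn (fun u : ℝ => (Real.sqrt (Real.sqrt (1 - y ^ 2)))⁻¹
      * (64 * (|u - x| ^ (-(13/16):ℝ) + |u - 1| ^ (-(13/16):ℝ) + |u - (-1)| ^ (-(13/16):ℝ))))
      (Icc (-1:ℝ) 1) := ((gsum_integrableOn x).const_mul 64).const_mul _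
  refine le_trans (integral_mono_of_nonneg (Filter.Eventually.of_forall hf0) hgint ?_) ?_
  · have hae : ∀ᵐ u ∂(volume.restrict (Icc (-1:ℝ) 1)),
        u ∈ Icc (-1:ℝ) 1 ∧ u ∉ ({-1, 1, x} : Set ℝ) :=
      (ae_restrict_mem measurableSet_Icc).and
        (ae_restrict_of_ae ((Set.to_countable _).ae_notMem _))
    filter_upwards [hae] with u hu
    obtain ⟨hmem, hnot⟩ := hu
    simp only [Set.mem_insert_iff, Set.mem_singleton_iff, not_or] at hnot
    obtain ⟨hn1, hn2, hnx⟩ := hnot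
    have huIoo : u ∈ Ioo (-1:ℝ) 1 :=
      ⟨lt_of_le_of_ne hmem.1 (Ne.symm hn1), lt_of_le_of_ne hmem.2 hn2⟩
    exact le_trans (hfle u huIoo hnx)
      (core_bound hx' hy' (abs_lt.mpr ⟨huIoo.1, huIoo.2⟩) hnx)
  · rw [integral_const_mul, integral_const_mul]
    have h1 := gsum_integral_le hx'
    have hB := B_nonneg (-(13/16):ℝ)
    have h2 : 64 * ∫ u in Icc (-1:ℝ) 1, (|u - x| ^ (-(13/16):ℝ) + |u - 1| ^ (-(13/16):ℝ)
        + |u - (-1)| ^ (-(13/16):ℝ)) ≤ DD := by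
      unfold DD; linarith
    exact mul_le_mul_of_nonneg_left h2 hc

lemma sq_bound {y : ℝ} (hy : y ∈ Ioo (-1:ℝ) 1) :
    ((Real.sqrt (Real.sqrt (1 - y ^ 2)))⁻¹ * DD) ^ 2 ≤
    DD ^ 2 * (|y - 1| ^ (-(1/2):ℝ) + |y - (-1)| ^ (-(1/2):ℝ)) := by
  obtain ⟨hy1, hy2⟩ := hy
  have hay : 0 < 1 - y ^ 2 := by nlinarith
  have h1 : ((Real.sqrt (Real.sqrt (1 - y ^ 2)))⁻¹) ^ 2 = (Real.sqrt (1 - y ^ 2))⁻¹ := by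
    rw [inv_pow, Real.sq_sqrt (Real.sqrt_nonneg _)]
  have e1 : (Real.sqrt (1 - y))⁻¹ = |y - 1| ^ (-(1/2):ℝ) := by
    have hav : |y - 1| = 1 - y := by rw [abs_of_neg (by linarith : y - 1 < 0)]; ring
    rw [hav, Real.sqrt_eq_rpow, ← Real.rpow_neg (by linarith : (0:ℝ) ≤ 1 - y)]
  have e2 : (Real.sqrt (1 + y))⁻¹ = |y - (-1)| ^ (-(1/2):ℝ) := by
    have hav : |y - (-1)| = 1 + y := by rw [abs_of_pos (by linarith : (0:ℝ) < y - (-1))]; ring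
    rw [hav, Real.sqrt_eq_rpow, ← Real.rpow_neg (by linarith : (0:ℝ) ≤ 1 + y)]
  have hfac : Real.sqrt (1 - y ^ 2) = Real.sqrt (1 - y) * Real.sqrt (1 + y) := by
    rw [← Real.sqrt_mul (by linarith : (0:ℝ) ≤ 1 - y)]
    congr 1; ring
  have hs1 : 0 < Real.sqrt (1 - y) := Real.sqrt_pos.mpr (by linarith)
  have hs2 : 0 < Real.sqrt (1 + y) := Real.sqrt_pos.mpr (by linarith)
  have h2 : (Real.sqrt (1 - y ^ 2))⁻¹ ≤ |y - 1| ^ (-(1/2):ℝ) + |y - (-1)| ^ (-(1/2):ℝ) := by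
    rcases le_total 0 y with h | h
    · have hone : 1 ≤ Real.sqrt (1 + y) := by
        have := Real.sqrt_le_sqrt (show (1:ℝ) ≤ 1 + y by linarith)
        rwa [Real.sqrt_one] at this
      have hle : Real.sqrt (1 - y) ≤ Real.sqrt (1 - y ^ 2) := by
        rw [hfac]; exact le_mul_of_one_le_right hs1.le hone
      have h3 := inv_anti₀ hs1 hle
      have hnn : (0:ℝ) ≤ |y - (-1)| ^ (-(1/2):ℝ) := by positivity
      calc (Real.sqrt (1 - y ^ 2))⁻¹ ≤ (Real.sqrt (1 - y))⁻¹ := h3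
        _ = |y - 1| ^ (-(1/2):ℝ) := e1
        _ ≤ _ := le_add_of_nonneg_right hnn
    · have hone : 1 ≤ Real.sqrt (1 - y) := by
        have := Real.sqrt_le_sqrt (show (1:ℝ) ≤ 1 - y by linarith)
        rwa [Real.sqrt_one] at this
      have hle : Real.sqrt (1 + y) ≤ Real.sqrt (1 - y ^ 2) := by
        rw [hfac]; exact le_mul_of_one_le_left hs2.le hone
      have h3 := inv_anti₀ hs2 hle
      have hnn : (0:ℝ) ≤ |y - 1| ^ (-(1/2):ℝ) := by positivity
      calc (Real.sqrt (1 - y ^ 2))⁻¹ ≤ (Real.sqrt (1 + y))⁻¹ := h3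
        _ = |y - (-1)| ^ (-(1/2):ℝ) := e2
        _ ≤ _ := le_add_of_nonneg_left hnn
  calc ((Real.sqrt (Real.sqrt (1 - y ^ 2)))⁻¹ * DD) ^ 2
      = ((Real.sqrt (Real.sqrt (1 - y ^ 2)))⁻¹) ^ 2 * DD ^ 2 := by ring
    _ = (Real.sqrt (1 - y ^ 2))⁻¹ * DD ^ 2 := by rw [h1]
    _ ≤ (|y - 1| ^ (-(1/2):ℝ) + |y - (-1)| ^ (-(1/2):ℝ)) * DD ^ 2 :=
        mul_le_mul_of_nonneg_right h2 (sq_nonneg DD)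
    _ = DD ^ 2 * (|y - 1| ^ (-(1/2):ℝ) + |y - (-1)| ^ (-(1/2):ℝ)) := by ring

lemma y_int_le {x : ℝ} (hx : x ∈ Icc (-1:ℝ) 1) :
    ∫ y in Icc (-1:ℝ) 1, (∫ u in Icc (-1:ℝ) 1, |Real.log (|x - u|)| /
        ((Real.sqrt (1 - y ^ 2) + Real.sqrt (1 - u ^ 2)) * Real.sqrt (1 - u ^ 2))) ^ 2
      ≤ DD ^ 2 * (2 * BB) := by
  have i1 := integrableOn_abs_sub_rpow (r := (-(1/2):ℝ)) (by norm_num) 1 (-1) 1 (by norm_num)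
  have i2 := integrableOn_abs_sub_rpow (r := (-(1/2):ℝ)) (by norm_num) (-1) (-1) 1 (by norm_num)
  have hgint : IntegrableOn (fun y : ℝ => DD ^ 2 * (|y - 1| ^ (-(1/2):ℝ)
      + |y - (-1)| ^ (-(1/2):ℝ))) (Icc (-1:ℝ) 1) := (i1.add i2).const_mul _
  refine le_trans (integral_mono_of_nonneg
    (Filter.Eventually.of_forall (fun y => sq_nonneg _)) hgint ?_) ?_
  · have hae : ∀ᵐ y ∂(volume.restrict (Icc (-1:ℝ) 1)),
        y ∈ Icc (-1:ℝ) 1 ∧ y ∉ ({-1, 1} : Set ℝ) :=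
      (ae_restrict_mem measurableSet_Icc).and
        (ae_restrict_of_ae ((Set.to_countable _).ae_notMem _))
    filter_upwards [hae] with y hy
    obtain ⟨hmem, hnot⟩ := hy
    simp only [Set.mem_insert_iff, Set.mem_singleton_iff, not_or] at hnot
    have hyIoo : y ∈ Ioo (-1:ℝ) 1 :=
      ⟨lt_of_le_of_ne hmem.1 (Ne.symm hnot.1), lt_of_le_of_ne hmem.2 hnot.2⟩
    have hI0 : 0 ≤ ∫ u in Icc (-1:ℝ) 1, |Real.log (|x - u|)| /
        ((Real.sqrt (1 - y ^ 2) + Real.sqrt (1 - u ^ 2)) * Real.sqrt (1 - u ^ 2)) :=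
      integral_nonneg fun u => div_nonneg (abs_nonneg _)
        (mul_nonneg (add_nonneg (Real.sqrt_nonneg _) (Real.sqrt_nonneg _)) (Real.sqrt_nonneg _))
    have hIle : (∫ u in Icc (-1:ℝ) 1, |Real.log (|x - u|)| /
        ((Real.sqrt (1 - y ^ 2) + Real.sqrt (1 - u ^ 2)) * Real.sqrt (1 - u ^ 2)))
        ≤ (Real.sqrt (Real.sqrt (1 - y ^ 2)))⁻¹ * DD := by
      refine key_inner hx hyIoo (fun u => div_nonneg (abs_nonneg _)
        (mul_nonneg (add_nonneg (Real.sqrt_nonneg _) (Real.sqrt_nonneg _))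
          (Real.sqrt_nonneg _))) ?_
      intro u huI _
      have hb : 0 < Real.sqrt (1 - u ^ 2) := Real.sqrt_pos.mpr (by nlinarith [huI.1, huI.2])
      have hd : 0 < (Real.sqrt (1 - y ^ 2) + Real.sqrt (1 - u ^ 2)) * Real.sqrt (1 - u ^ 2) :=
        mul_pos (add_pos_of_nonneg_of_pos (Real.sqrt_nonneg _) hb) hb
      exact (div_le_div_iff_of_pos_right hd).mpr (by nlinarith [abs_nonneg (Real.log (|x - u|))])
    calc (∫ u in Icc (-1:ℝ) 1, |Real.log (|x - u|)| /
          ((Real.sqrt (1 - y ^ 2) + Real.sqrt (1 - u ^ 2)) * Real.sqrt (1 - u ^ 2))) ^ 2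
        ≤ ((Real.sqrt (Real.sqrt (1 - y ^ 2)))⁻¹ * DD) ^ 2 := pow_le_pow_left₀ hI0 hIle 2
      _ ≤ DD ^ 2 * (|y - 1| ^ (-(1/2):ℝ) + |y - (-1)| ^ (-(1/2):ℝ)) := sq_bound hyIoo
  · rw [integral_const_mul, integral_add i1 i2]
    have e1 := integral_abs_sub_rpow_le (r := (-(1/2):ℝ)) (c := 1) (by norm_num) (by norm_num)
    have e2 := integral_abs_sub_rpow_le (r := (-(1/2):ℝ)) (c := -1) (by norm_num) (by norm_num)
    have h3 : (∫ u in Icc (-1:ℝ) 1, |u - 1| ^ (-(1/2):ℝ))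
        + (∫ u in Icc (-1:ℝ) 1, |u - (-1)| ^ (-(1/2):ℝ)) ≤ 2 * BB := by
      unfold BB; linarith
    exact mul_le_mul_of_nonneg_left h3 (sq_nonneg DD)

/-- The Hilbert–Schmidt estimate
`∫∫ (∫ |log|x−u|| / ((√(1−y²)+√(1−u²))√(1−u²)) du)² dy dx ≤ C` on `[−1,1]`,
and consequently the kernel
`N₂(x,y) = ∫ K̃(x,u)(y+u)/((√(1−y²)+√(1−u²))√(1−u²)) du` is square-integrable on
`[−1,1]²` whenever `|K̃(x,u)| ≤ |log|x−u|| + 1`. -/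
theorem possio_kernel_hilbert_schmidt :
    (∃ C : ℝ, 0 < C ∧
      (∫ x in Set.Icc (-1 : ℝ) 1, ∫ y in Set.Icc (-1 : ℝ) 1,
        (∫ u in Set.Icc (-1 : ℝ) 1,
          |Real.log (|x - u|)| /
            ((Real.sqrt (1 - y ^ 2) + Real.sqrt (1 - u ^ 2)) * Real.sqrt (1 - u ^ 2))) ^ 2)
        ≤ C) ∧
    ∀ K : ℝ → ℝ → ℂ, Measurable (fun p : ℝ × ℝ => K p.1 p.2) →
      (∀ x u : ℝ, ‖K x u‖ ≤ |Real.log (|x - u|)| + 1) →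
      IntegrableOn (fun p : ℝ × ℝ =>
          ‖∫ u in Set.Icc (-1 : ℝ) 1, K p.1 u *
            (((p.2 + u) /
              ((Real.sqrt (1 - p.2 ^ 2) + Real.sqrt (1 - u ^ 2)) * Real.sqrt (1 - u ^ 2)) : ℝ) : ℂ)‖ ^ 2)
        (Set.Icc (-1 : ℝ) 1 ×ˢ Set.Icc (-1 : ℝ) 1) := by
  constructor
  · -- Part 1
    refine ⟨DD ^ 2 * (2 * BB) * 2 + 1, ?_, ?_⟩
    · have h := mul_nonneg (mul_nonneg (sq_nonneg DD)
        (by linarith [BB_nonneg] : (0:ℝ) ≤ 2 * BB)) (by norm_num : (0:ℝ) ≤ 2)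
      linarith
    · have hgi : IntegrableOn (fun _ : ℝ => DD ^ 2 * (2 * BB)) (Icc (-1:ℝ) 1) :=
        (integrableOn_const_iff enorm_ne_top).mpr (Or.inr measure_Icc_lt_top)
      have h1 : (∫ x in Set.Icc (-1 : ℝ) 1, ∫ y in Set.Icc (-1 : ℝ) 1,
          (∫ u in Set.Icc (-1 : ℝ) 1, |Real.log (|x - u|)| /
            ((Real.sqrt (1 - y ^ 2) + Real.sqrt (1 - u ^ 2)) * Real.sqrt (1 - u ^ 2))) ^ 2)
          ≤ ∫ _ in Set.Icc (-1 : ℝ) 1, DD ^ 2 * (2 * BB) := by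
        refine integral_mono_of_nonneg
          (Filter.Eventually.of_forall fun x => integral_nonneg fun y => sq_nonneg _) hgi ?_
        filter_upwards [ae_restrict_mem measurableSet_Icc] with x hx
        exact y_int_le hx
      have h2 : (∫ _ in Set.Icc (-1 : ℝ) 1, DD ^ 2 * (2 * BB)) = 2 * (DD ^ 2 * (2 * BB)) := by
        rw [setIntegral_const, Real.volume_real_Icc]
        norm_num
      rw [h2] at h1
      linarith
  · -- Part 2
    intro K hK hKb
    have hrmeas : Measurable (fun q : (ℝ × ℝ) × ℝ =>
        ((q.1.2 + q.2) / ((Real.sqrt (1 - q.1.2 ^ 2) + Real.sqrt (1 - q.2 ^ 2))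
          * Real.sqrt (1 - q.2 ^ 2)))) := by
      fun_prop
    have hKm : Measurable (fun q : (ℝ × ℝ) × ℝ => K q.1.1 q.2) :=
      hK.comp (measurable_fst.fst.prodMk measurable_snd)
    have hFm : Measurable (fun q : (ℝ × ℝ) × ℝ => K q.1.1 q.2 *
        (((q.1.2 + q.2) / ((Real.sqrt (1 - q.1.2 ^ 2) + Real.sqrt (1 - q.2 ^ 2))
          * Real.sqrt (1 - q.2 ^ 2)) : ℝ) : ℂ)) :=
      hKm.mul (Complex.measurable_ofReal.comp hrmeas)
    have hNsm : StronglyMeasurable (fun p : ℝ × ℝ => ∫ u in Set.Icc (-1 : ℝ) 1, K p.1 u *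
        (((p.2 + u) / ((Real.sqrt (1 - p.2 ^ 2) + Real.sqrt (1 - u ^ 2))
          * Real.sqrt (1 - u ^ 2)) : ℝ) : ℂ)) :=
      hFm.stronglyMeasurable.integral_prod_right'
    rw [IntegrableOn, Measure.volume_eq_prod, ← Measure.prod_restrict]
    haveI : IsFiniteMeasure (volume.restrict (Icc (-1:ℝ) 1)) :=
      ⟨by rw [Measure.restrict_apply_univ]; exact measure_Icc_lt_top⟩
    have i1 := integrableOn_abs_sub_rpow (r := (-(1/2):ℝ)) (by norm_num) 1 (-1) 1 (by norm_num)
    have i2 := integrableOn_abs_sub_rpow (r := (-(1/2):ℝ)) (by norm_num) (-1) (-1) 1 (by norm_num)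
    have hg2m : AEStronglyMeasurable (fun p : ℝ × ℝ => DD ^ 2 * (|p.2 - 1| ^ (-(1/2):ℝ)
        + |p.2 - (-1)| ^ (-(1/2):ℝ)))
        ((volume.restrict (Icc (-1:ℝ) 1)).prod (volume.restrict (Icc (-1:ℝ) 1))) := by
      apply Measurable.aestronglyMeasurable
      fun_prop
    have hg2int : Integrable (fun p : ℝ × ℝ => DD ^ 2 * (|p.2 - 1| ^ (-(1/2):ℝ)
        + |p.2 - (-1)| ^ (-(1/2):ℝ)))
        ((volume.restrict (Icc (-1:ℝ) 1)).prod (volume.restrict (Icc (-1:ℝ) 1))) := by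
      rw [integrable_prod_iff hg2m]
      constructor
      · exact Filter.Eventually.of_forall fun x => ((i1.add i2).const_mul _)
      · have hconst : Integrable (fun _ : ℝ => ∫ y in Icc (-1:ℝ) 1,
            ‖DD ^ 2 * (|y - 1| ^ (-(1/2):ℝ) + |y - (-1)| ^ (-(1/2):ℝ))‖)
            (volume.restrict (Icc (-1:ℝ) 1)) := integrable_const _
        exact hconst
    have haeP : ∀ᵐ p ∂((volume.restrict (Icc (-1:ℝ) 1)).prod (volume.restrict (Icc (-1:ℝ) 1))),
        p ∈ (Icc (-1:ℝ) 1) ×ˢ (Icc (-1:ℝ) 1) := by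
      rw [Measure.prod_restrict]
      exact ae_restrict_mem (measurableSet_Icc.prod measurableSet_Icc)
    have haebad : ∀ᵐ p ∂((volume.restrict (Icc (-1:ℝ) 1)).prod (volume.restrict (Icc (-1:ℝ) 1))),
        p ∉ (Prod.snd ⁻¹' ({-1, 1} : Set ℝ)) := by
      refine measure_eq_zero_iff_ae_notMem.mp ?_
      have hsub : (Prod.snd ⁻¹' ({-1, 1} : Set ℝ)) ⊆ (univ : Set ℝ) ×ˢ ({-1, 1} : Set ℝ) :=
        fun p hp => ⟨mem_univ _, hp⟩
      refine measure_mono_null hsub ?_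
      rw [Measure.prod_prod, (Set.to_countable ({-1, 1} : Set ℝ)).measure_zero
        (volume.restrict (Icc (-1:ℝ) 1)), mul_zero]
    refine Integrable.mono' hg2int
      (((continuous_norm.pow 2).comp_stronglyMeasurable hNsm).aestronglyMeasurable) ?_
    filter_upwards [haeP, haebad] with p hpmem hpbad
    have hp1 : p.1 ∈ Icc (-1:ℝ) 1 := hpmem.1
    have hp2 : p.2 ∈ Icc (-1:ℝ) 1 := hpmem.2
    simp only [Set.mem_preimage, Set.mem_insert_iff, Set.mem_singleton_iff, not_or] at hpbad
    have hp2' : p.2 ∈ Ioo (-1:ℝ) 1 :=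
      ⟨lt_of_le_of_ne hp2.1 (Ne.symm hpbad.1), lt_of_le_of_ne hp2.2 hpbad.2⟩
    have hNle : ‖∫ u in Set.Icc (-1 : ℝ) 1, K p.1 u *
        (((p.2 + u) / ((Real.sqrt (1 - p.2 ^ 2) + Real.sqrt (1 - u ^ 2))
          * Real.sqrt (1 - u ^ 2)) : ℝ) : ℂ)‖
        ≤ (Real.sqrt (Real.sqrt (1 - p.2 ^ 2)))⁻¹ * DD := by
      refine le_trans (norm_integral_le_integral_norm _)
        (key_inner hp1 hp2' (fun u => norm_nonneg _) ?_)
      intro u huI hux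
      have hb : 0 < Real.sqrt (1 - u ^ 2) := Real.sqrt_pos.mpr (by nlinarith [huI.1, huI.2])
      have hd : 0 < (Real.sqrt (1 - p.2 ^ 2) + Real.sqrt (1 - u ^ 2)) * Real.sqrt (1 - u ^ 2) :=
        mul_pos (add_pos_of_nonneg_of_pos (Real.sqrt_nonneg _) hb) hb
      rw [norm_mul, Complex.norm_real, Real.norm_eq_abs, abs_div, abs_of_pos hd,
        ← mul_div_assoc]
      refine (div_le_div_iff_of_pos_right hd).mpr ?_
      have habs : |p.2 + u| ≤ 2 := abs_le.mpr ⟨by linarith [hp2.1, huI.1.le],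
        by linarith [hp2.2, huI.2.le]⟩
      exact mul_le_mul (hKb p.1 u) habs (abs_nonneg _) (by positivity)
    have hnn : (0:ℝ) ≤ ‖∫ u in Set.Icc (-1 : ℝ) 1, K p.1 u *
        (((p.2 + u) / ((Real.sqrt (1 - p.2 ^ 2) + Real.sqrt (1 - u ^ 2))
          * Real.sqrt (1 - u ^ 2)) : ℝ) : ℂ)‖ := norm_nonneg _
    rw [Real.norm_eq_abs, abs_of_nonneg (by positivity)]
    calc ‖∫ u in Set.Icc (-1 : ℝ) 1, K p.1 u *
          (((p.2 + u) / ((Real.sqrt (1 - p.2 ^ 2) + Real.sqrt (1 - u ^ 2))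
            * Real.sqrt (1 - u ^ 2)) : ℝ) : ℂ)‖ ^ 2
        ≤ ((Real.sqrt (Real.sqrt (1 - p.2 ^ 2)))⁻¹ * DD) ^ 2 := pow_le_pow_left₀ hnn hNle 2
      _ ≤ DD ^ 2 * (|p.2 - 1| ^ (-(1/2):ℝ) + |p.2 - (-1)| ^ (-(1/2):ℝ)) := sq_bound hp2'
end

section
/- Let σ1 < σ2 be real numbers and Ψ(s) = (e^{iπ(s−σ1)/(σ2−σ1)} − i)/(e^{iπ(s−σ1)/(σ2−σ1)} + i). Then for every γ' ∈ (0, π/2) there exist constants c > 0 and δ0 ∈ (0, 1/2) such that for all δ ∈ (0, δ0), all ρ ∈ [γ', π − γ'], and all τ ∈ ℝ with e^{|τ|} ≤ c/δ, the point s = σ1 + (σ2−σ1)(ρ + iτ)/π satisfies σ1 < Re s < σ2 and |Ψ(s)| ≤ 1 − 2δ. -/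
open Complex

set_option maxHeartbeats 1000000

/-- For the strip-to-disk map
`Ψ(s) = (e^{iπ(s−σ1)/(σ2−σ1)} − i)/(e^{iπ(s−σ1)/(σ2−σ1)} + i)` and every
`γ' ∈ (0, π/2)` there are `c > 0` and `δ0 ∈ (0, 1/2)` such that for all
`δ ∈ (0, δ0)`, `ρ ∈ [γ', π − γ']` and `τ` with `e^{|τ|} ≤ c/δ`, the point
`s = σ1 + (σ2−σ1)(ρ + iτ)/π` lies in the strip and `|Ψ(s)| ≤ 1 − 2δ`. -/
theorem substrip_in_disk_preimage
    (σ1 σ2 : ℝ) (h : σ1 < σ2)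
    (Ψ : ℂ → ℂ)
    (hΨ : ∀ s : ℂ, Ψ s =
      (Complex.exp (Complex.I * (Real.pi : ℂ) * (s - (σ1 : ℂ)) / ((σ2 : ℂ) - (σ1 : ℂ))) - Complex.I) /
      (Complex.exp (Complex.I * (Real.pi : ℂ) * (s - (σ1 : ℂ)) / ((σ2 : ℂ) - (σ1 : ℂ))) + Complex.I)) :
    ∀ γ' : ℝ, 0 < γ' → γ' < Real.pi / 2 →
      ∃ c : ℝ, 0 < c ∧ ∃ δ0 : ℝ, 0 < δ0 ∧ δ0 < 1 / 2 ∧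
        ∀ δ : ℝ, 0 < δ → δ < δ0 →
        ∀ ρ : ℝ, γ' ≤ ρ → ρ ≤ Real.pi - γ' →
        ∀ τ : ℝ, Real.exp |τ| ≤ c / δ →
        ∀ s : ℂ, s = (σ1 : ℂ) + ((σ2 : ℂ) - (σ1 : ℂ)) * ((ρ : ℂ) + (τ : ℂ) * Complex.I) / (Real.pi : ℂ) →
          (σ1 < s.re ∧ s.re < σ2) ∧ ‖Ψ s‖ ≤ 1 - 2 * δ := by
  intro γ' hγ0 hγπ
  have hπ : (0:ℝ) < Real.pi := Real.pi_pos
  have hσ : (0:ℝ) < σ2 - σ1 := by linarith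
  have hsin : 0 < Real.sin γ' := Real.sin_pos_of_pos_of_lt_pi hγ0 (by linarith)
  refine ⟨Real.sin γ' / 8, by positivity, 1/8, by norm_num, by norm_num, ?_⟩
  intro δ hδ0 hδ1 ρ hρ1 hρ2 τ hτ s hs
  have hsinρ : Real.sin γ' ≤ Real.sin ρ := by
    rcases le_total ρ (Real.pi / 2) with h1 | h1
    · exact Real.sin_le_sin_of_le_of_le_pi_div_two (by linarith) h1 hρ1
    · rw [← Real.sin_pi_sub ρ]
      exact Real.sin_le_sin_of_le_of_le_pi_div_two (by linarith) (by linarith) (by linarith)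
  have hsinρ1 : Real.sin ρ ≤ 1 := Real.sin_le_one ρ
  have hπ' : (Real.pi : ℂ) ≠ 0 := by exact_mod_cast hπ.ne'
  have hσ' : ((σ2 : ℂ) - σ1) ≠ 0 := by
    intro hcon
    have : (σ2 : ℝ) - σ1 = 0 := by exact_mod_cast (by exact_mod_cast hcon : ((σ2 - σ1 : ℝ) : ℂ) = 0)
    linarith
  -- real part
  have hsre : s.re = σ1 + (σ2 - σ1) * ρ / Real.pi := by
    have : s = ((σ1 + (σ2 - σ1) * ρ / Real.pi : ℝ) : ℂ) + ((σ2 - σ1) * τ / Real.pi : ℝ) * Complex.I := by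
      rw [hs]; push_cast; field_simp; ring
    rw [this]; simp
  have hstrip1 : σ1 < s.re := by
    rw [hsre]
    have : 0 < (σ2 - σ1) * ρ / Real.pi := div_pos (mul_pos hσ (by linarith)) hπ
    linarith
  have hstrip2 : s.re < σ2 := by
    rw [hsre]
    have : (σ2 - σ1) * ρ / Real.pi < σ2 - σ1 := by
      rw [div_lt_iff₀ hπ]
      nlinarith
    linarith
  -- exponent
  have harg : Complex.I * (Real.pi : ℂ) * (s - (σ1 : ℂ)) / ((σ2 : ℂ) - (σ1 : ℂ)) = (-τ : ℝ) + (ρ : ℝ) * Complex.I := by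
    rw [hs]
    field_simp
    ring_nf
    rw [Complex.I_sq]
    push_cast
    ring
  set z : ℂ := ((-τ : ℝ) : ℂ) + (ρ : ℝ) * Complex.I with hz
  have hzre : z.re = -τ := by simp [hz]
  have hzim : z.im = ρ := by simp [hz]
  set w : ℂ := Complex.exp z with hw
  set r : ℝ := Real.exp (-τ) with hrdef
  have hr : 0 < r := Real.exp_pos _
  have hwim : w.im = r * Real.sin ρ := by rw [hw, Complex.exp_im, hzre, hzim]
  have hwns : Complex.normSq w = r ^ 2 := by
    rw [Complex.normSq_eq_norm_sq, Complex.norm_exp, hzre]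
  have hwre2 : w.re ^ 2 + w.im ^ 2 = r ^ 2 := by
    have := hwns
    rw [Complex.normSq_apply] at this
    nlinarith [this]
  set E : ℝ := Real.exp (-|τ|) with hEdef
  have hE : 0 < E := Real.exp_pos _
  have hEr : E ≤ r := Real.exp_le_exp.2 (neg_le_neg (le_abs_self τ))
  have hrE : r * E ≤ 1 := by
    rw [hrdef, hEdef, ← Real.exp_add]
    have : -τ + -|τ| ≤ 0 := by
      have := neg_abs_le (-τ)
      simp at this ⊢
      linarith [le_abs_self (-τ), (abs_neg τ ▸ le_abs_self (-τ))]
    calc Real.exp (-τ + -|τ|) ≤ Real.exp 0 := Real.exp_le_exp.2 this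
      _ = 1 := Real.exp_zero
  have hEδ : 8 * δ ≤ E * Real.sin γ' := by
    have h1 : δ * Real.exp |τ| ≤ Real.sin γ' / 8 := by
      calc δ * Real.exp |τ| ≤ δ * (Real.sin γ' / 8 / δ) := by
            exact mul_le_mul_of_nonneg_left hτ hδ0.le
        _ = Real.sin γ' / 8 := by field_simp
    have h2 : Real.exp |τ| * E = 1 := by
      rw [hEdef, ← Real.exp_add]; simp
    have h3 : δ * Real.exp |τ| * E ≤ (Real.sin γ' / 8) * E :=
      mul_le_mul_of_nonneg_right h1 hE.le
    have h4 : δ * Real.exp |τ| * E = δ := by rw [mul_assoc, h2, mul_one]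
    nlinarith
  -- the key inequality
  have hB : 0 < r ^ 2 + 2 * (r * Real.sin ρ) + 1 := by nlinarith
  have hkey : r ^ 2 - 2 * (r * Real.sin ρ) + 1 ≤ (1 - 2 * δ) ^ 2 * (r ^ 2 + 2 * (r * Real.sin ρ) + 1) := by
    have hEB : E * (r ^ 2 + 1) ≤ 2 * r := by nlinarith
    have t1 : r ^ 2 + 2 * (r * Real.sin ρ) + 1 ≤ 2 * (r ^ 2 + 1) := by
      nlinarith [sq_nonneg (r - 1)]
    have t2 : 8 * δ * (r ^ 2 + 1) ≤ Real.sin γ' * (2 * r) := by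
      nlinarith [mul_le_mul_of_nonneg_right hEδ (by positivity : (0:ℝ) ≤ r ^ 2 + 1),
        mul_le_mul_of_nonneg_left hEB hsin.le]
    have t3 : 2 * r * Real.sin γ' ≤ 4 * (r * Real.sin ρ) := by nlinarith
    have t4 : 4 * δ * (1 - δ) * (r ^ 2 + 2 * (r * Real.sin ρ) + 1) ≤ 8 * δ * (r ^ 2 + 1) := by
      nlinarith [mul_le_mul_of_nonneg_left t1 hδ0.le,
        mul_nonneg (mul_nonneg hδ0.le hδ0.le) hB.le]
    nlinarith [t2, t3, t4]
  have hΨs : Ψ s = (w - Complex.I) / (w + Complex.I) := by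
    rw [hΨ s, harg]
  have habs2 : (‖Ψ s‖) ^ 2 = Complex.normSq (w - Complex.I) / Complex.normSq (w + Complex.I) := by
    rw [hΨs, Complex.sq_norm, Complex.normSq_div]
  have hnum : Complex.normSq (w - Complex.I) = r ^ 2 - 2 * (r * Real.sin ρ) + 1 := by
    simp only [Complex.normSq_apply, Complex.sub_re, Complex.sub_im, Complex.I_re, Complex.I_im]
    linear_combination hwre2 - 2 * hwim
  have hden : Complex.normSq (w + Complex.I) = r ^ 2 + 2 * (r * Real.sin ρ) + 1 := by
    simp only [Complex.normSq_apply, Complex.add_re, Complex.add_im, Complex.I_re, Complex.I_im]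
    linear_combination hwre2 + 2 * hwim
  have hsq : (‖Ψ s‖) ^ 2 ≤ (1 - 2 * δ) ^ 2 := by
    rw [habs2, hnum, hden, div_le_iff₀ hB]
    exact hkey
  refine ⟨⟨hstrip1, hstrip2⟩, ?_⟩
  have h0 : (0:ℝ) ≤ ‖Ψ s‖ := norm_nonneg _
  nlinarith [hsq, h0]
end
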